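/- Let θ ∈ [arcsin(1/4), π - arcsin(1/4)], set r = (2·sinθ·√(5+sin²θ) - 2·sin²θ - 1)^{1/2} and t = (cosθ/sinθ)·(r²+1). Then the three points (1,0,0), (-1,0,0) and (r·cosθ, r·sinθ, t) of ℍ¹ form an equilateral set for the Korányi metric d_H, with all three pairwise distances equal to 2. -/

import Mathlib

open MeasureTheory Set ENNReal Real

noncomputable section

/-- The first Heisenberg group `ℍ¹`, identified with `ℝ³`. -/
abbrev H1 := ℝ × ℝ × ℝ

/-- The group law of `ℍ¹`:
`x·y = (x₁+y₁, x₂+y₂, x₃+y₃ - 2(x₁y₂ - x₂y₁))`. -/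
def hmul1 (x y : H1) : H1 :=
  (x.1 + y.1, x.2.1 + y.2.1, x.2.2 + y.2.2 - 2 * (x.1 * y.2.1 - x.2.1 * y.1))

/-- The group inverse of `ℍ¹`, `x⁻¹ = -x`. -/
def hinv1 (x : H1) : H1 := (-x.1, -x.2.1, -x.2.2)

/-- The Korányi norm `‖x‖_H = ((x₁²+x₂²)² + x₃²)^{1/4}`. -/
def KNorm1 (x : H1) : ℝ := ((x.1 ^ 2 + x.2.1 ^ 2) ^ 2 + x.2.2 ^ 2) ^ ((1 : ℝ) / 4)

/-- The Korányi metric `d_H(x,y) = ‖x⁻¹·y‖_H` on `ℍ¹`. -/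
def dH1 (x y : H1) : ℝ := KNorm1 (hmul1 (hinv1 x) y)

/-- The closed `d_H`-ball of center `x` and radius `r`. -/
def ball1 (x : H1) (r : ℝ) : Set H1 := {y | dH1 x y ≤ r}

lemma sixteen_rpow : ((16 : ℝ)) ^ ((1 : ℝ)/4) = 2 := by
  have : (16 : ℝ) = 2 ^ (4 : ℝ) := by
    rw [show (4:ℝ) = ((4:ℕ):ℝ) by norm_num, Real.rpow_natCast]; norm_num
  rw [this, ← Real.rpow_mul (by norm_num)]; norm_num

lemma sin_ge_quarter (x : ℝ) (h1 : Real.arcsin (1/4) ≤ x) (h2 : x ≤ Real.pi/2) :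
    (1:ℝ)/4 ≤ Real.sin x := by
  have hs : Real.sin (Real.arcsin (1/4)) = 1/4 :=
    Real.sin_arcsin (by norm_num) (by norm_num)
  rw [← hs]
  have hmem1 : Real.arcsin (1/4) ∈ Set.Icc (-(Real.pi/2)) (Real.pi/2) :=
    Real.arcsin_mem_Icc _
  have hmem2 : x ∈ Set.Icc (-(Real.pi/2)) (Real.pi/2) :=
    ⟨le_trans hmem1.1 h1, h2⟩
  exact Real.strictMonoOn_sin.monotoneOn hmem1 hmem2 h1

/-- For `θ ∈ [arcsin(1/4), π - arcsin(1/4)]`,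
`r = (2 sinθ √(5+sin²θ) - 2 sin²θ - 1)^{1/2}` and `t = (cosθ/sinθ)(r²+1)`, the points
`(1,0,0)`, `(-1,0,0)` and `(r cosθ, r sinθ, t)` form an equilateral set for the Korányi
metric, with all pairwise distances equal to `2`. -/
theorem statement16 (θ : ℝ) (hθ₁ : Real.arcsin (1 / 4) ≤ θ)
    (hθ₂ : θ ≤ Real.pi - Real.arcsin (1 / 4)) (r t : ℝ)
    (hr : r = Real.sqrt (2 * Real.sin θ * Real.sqrt (5 + Real.sin θ ^ 2)
      - 2 * Real.sin θ ^ 2 - 1))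
    (ht : t = (Real.cos θ / Real.sin θ) * (r ^ 2 + 1)) :
    dH1 (1, 0, 0) (-1, 0, 0) = 2 ∧
    dH1 (1, 0, 0) (r * Real.cos θ, r * Real.sin θ, t) = 2 ∧
    dH1 (-1, 0, 0) (r * Real.cos θ, r * Real.sin θ, t) = 2 := by
  set s := Real.sin θ with hsdef
  set c := Real.cos θ with hcdef
  have hs14 : (1:ℝ)/4 ≤ s := by
    rcases le_or_gt θ (Real.pi/2) with h | h
    · exact sin_ge_quarter θ hθ₁ h
    · have := sin_ge_quarter (Real.pi - θ) (by linarith) (by linarith)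
      rwa [Real.sin_pi_sub] at this
  have hs0 : (0:ℝ) < s := by linarith
  set w := Real.sqrt (5 + s ^ 2) with hwdef
  have hw0 : 0 ≤ w := Real.sqrt_nonneg _
  have hw2 : w ^ 2 = 5 + s ^ 2 := Real.sq_sqrt (by positivity)
  have hE : 0 ≤ 2 * s * w - 2 * s ^ 2 - 1 := by
    nlinarith [mul_nonneg hs0.le hw0, sq_nonneg (2*s*w - (2*s^2+1)), sq_nonneg (2*s*w + 2*s^2+1)]
  have hr2 : r ^ 2 = 2 * s * w - 2 * s ^ 2 - 1 := by
    rw [hr]; exact Real.sq_sqrt hE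
  have hpyth : s ^ 2 + c ^ 2 = 1 := by
    rw [hsdef, hcdef, add_comm]; exact Real.cos_sq_add_sin_sq θ
  have hsne : s ≠ 0 := ne_of_gt hs0
  refine ⟨?_, ?_, ?_⟩
  · show KNorm1 (hmul1 (hinv1 (1,0,0)) (-1,0,0)) = 2
    simp only [hmul1, hinv1, KNorm1]
    norm_num
  · show KNorm1 (hmul1 (hinv1 (1,0,0)) (r*c, r*s, t)) = 2
    simp only [hmul1, hinv1, KNorm1]
    have hbase : (((-1 + r*c) ^ 2 + (0 + r*s) ^ 2) ^ 2
        + (0 + t - 2 * ((-1) * (r*s) - 0 * (r*c))) ^ 2) = 16 := by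
      rw [ht]
      field_simp
      linear_combination ((r^2+1)^2 + 4*r^2*s^2 + r^2*s^2*(2 - 4*r*c + r^2*(c^2+s^2+1))) * hpyth + (r^2 + 2*s*w + 2*s^2 + 1) * hr2 + 4*s^2 * hw2
    norm_num at hbase ⊢
    rw [hbase]
    exact sixteen_rpow
  · show KNorm1 (hmul1 (hinv1 (-1,0,0)) (r*c, r*s, t)) = 2
    simp only [hmul1, hinv1, KNorm1]
    have hbase : (((1 + r*c) ^ 2 + (0 + r*s) ^ 2) ^ 2
        + (0 + t - 2 * (1 * (r*s) - 0 * (r*c))) ^ 2) = 16 := by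
      rw [ht]
      field_simp
      linear_combination ((r^2+1)^2 + 4*r^2*s^2 + r^2*s^2*(2 + 4*r*c + r^2*(c^2+s^2+1))) * hpyth + (r^2 + 2*s*w + 2*s^2 + 1) * hr2 + 4*s^2 * hw2
    norm_num at hbase ⊢
    rw [hbase]
    exact sixteen_rpow

end
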